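/- Fix a stationary policy π in a finite MDP with rewards in [0,1] whose gain ρ^π is a constant vector, gain ρ^π and bias h^π satisfying the Poisson equation ρ^π + h^π = r_π + P_π h^π and P_π ρ^π = ρ^π. Then for every γ ∈ (0,1), ‖(1/(1−γ))ρ^π − V_γ^π‖_∞ ≤ span(h^π), where V_γ^π = (I − γP_π)^{-1} r_π. -/
import Mathlib


open Matrix

/-- The span seminorm: span(x) = max_s x(s) − min_s x(s). -/
noncomputable def spanSem {S : Type*} [Fintype S] [Nonempty S] (x : S → ℝ) : ℝ :=
  (⨆ s, x s) - ⨅ s, x s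

/-- For a policy with constant gain ρ^π satisfying the Poisson equation,
‖(1/(1−γ))ρ^π − V_γ^π‖_∞ ≤ span(h^π) where V_γ^π = (I − γP_π)^{-1} r_π. -/
theorem stmt11 {S : Type*} [Fintype S] [Nonempty S] [DecidableEq S]
    (P : Matrix S S ℝ) (hP0 : ∀ i j, 0 ≤ P i j) (hP1 : ∀ i, ∑ j, P i j = 1)
    (r : S → ℝ) (hr : ∀ s, r s ∈ Set.Icc (0 : ℝ) 1)
    (ρ h : S → ℝ)
    (hconst : ∃ c : ℝ, ρ = fun _ => c)
    (hPρ : P *ᵥ ρ = ρ)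
    (hPoisson : ρ + h = r + P *ᵥ h)
    (γ : ℝ) (hγ0 : 0 < γ) (hγ1 : γ < 1) :
    ‖(1 / (1 - γ)) • ρ - ((1 : Matrix S S ℝ) - γ • P)⁻¹ *ᵥ r‖ ≤ spanSem h := by
  have h1γ : (0:ℝ) < 1 - γ := by linarith
  set A : Matrix S S ℝ := (1 : Matrix S S ℝ) - γ • P with hA
  have hAx : ∀ x : S → ℝ, A *ᵥ x = x - γ • (P *ᵥ x) := by
    intro x
    simp [hA, Matrix.sub_mulVec, Matrix.smul_mulVec, Matrix.one_mulVec]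
  -- row bounds for stochastic matrix
  have hPle : ∀ (x : S → ℝ) (b : ℝ), (∀ j, x j ≤ b) → ∀ s, (P *ᵥ x) s ≤ b := by
    intro x b hxb s
    have hrow : (P *ᵥ x) s = ∑ j, P s j * x j := by
      simp [Matrix.mulVec, dotProduct]
    rw [hrow]
    calc ∑ j, P s j * x j ≤ ∑ j, P s j * b := by
          apply Finset.sum_le_sum
          intro j _
          exact mul_le_mul_of_nonneg_left (hxb j) (hP0 s j)
      _ = b := by rw [← Finset.sum_mul, hP1 s, one_mul]
  have hPge : ∀ (x : S → ℝ) (b : ℝ), (∀ j, b ≤ x j) → ∀ s, b ≤ (P *ᵥ x) s := by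
    intro x b hxb s
    have hrow : (P *ᵥ x) s = ∑ j, P s j * x j := by
      simp [Matrix.mulVec, dotProduct]
    rw [hrow]
    calc b = ∑ j, P s j * b := by rw [← Finset.sum_mul, hP1 s, one_mul]
      _ ≤ ∑ j, P s j * x j := by
          apply Finset.sum_le_sum
          intro j _
          exact mul_le_mul_of_nonneg_left (hxb j) (hP0 s j)
  -- invertibility of A
  have hdet : A.det ≠ 0 := by
    intro hd
    obtain ⟨v, hv0, hv⟩ := (Matrix.exists_mulVec_eq_zero_iff).mpr hd
    have hveq : v = γ • (P *ᵥ v) := by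
      rw [hAx] at hv
      exact sub_eq_zero.mp hv
    obtain ⟨s0, hs0⟩ := Finite.exists_max (fun s => |v s|)
    have habs : ∀ j, |v j| ≤ |v s0| := hs0
    have h1 : |v s0| = γ * |(P *ᵥ v) s0| := by
      have hc := congrFun hveq s0
      simp only [Pi.smul_apply, smul_eq_mul] at hc
      rw [hc, abs_mul, abs_of_pos hγ0]
    have h2 : |(P *ᵥ v) s0| ≤ |v s0| := by
      have hle : (P *ᵥ v) s0 ≤ |v s0| := hPle v |v s0| (fun j => (abs_le.mp (habs j)).2) s0
      have hge : -|v s0| ≤ (P *ᵥ v) s0 := hPge v (-|v s0|) (fun j => (abs_le.mp (habs j)).1) s0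
      exact abs_le.mpr ⟨hge, hle⟩
    have h3 : |v s0| ≤ γ * |v s0| := by
      calc |v s0| = γ * |(P *ᵥ v) s0| := h1
        _ ≤ γ * |v s0| := mul_le_mul_of_nonneg_left h2 (le_of_lt hγ0)
    have h4 : |v s0| = 0 := by nlinarith [abs_nonneg (v s0)]
    apply hv0
    funext j
    have h5 : |v j| ≤ 0 := h4 ▸ habs j
    exact abs_eq_zero.mp (le_antisymm h5 (abs_nonneg _))
  have hU : IsUnit A.det := isUnit_iff_ne_zero.mpr hdet
  set V : S → ℝ := A⁻¹ *ᵥ r with hV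
  have hAV : A *ᵥ V = r := by
    rw [hV, Matrix.mulVec_mulVec, Matrix.mul_nonsing_inv A hU, Matrix.one_mulVec]
  set u : S → ℝ := (1 / (1 - γ)) • ρ - V + h with hu
  -- A u = (1-γ) • (P *ᵥ h)
  have hAρ : A *ᵥ ρ = (1 - γ) • ρ := by
    rw [hAx, hPρ, sub_smul, one_smul]
  have hAu : A *ᵥ u = (1 - γ) • (P *ᵥ h) := by
    rw [hu, Matrix.mulVec_add, Matrix.mulVec_sub, Matrix.mulVec_smul, hAρ, hAV, hAx h]
    have hsm : (1 / (1 - γ)) • (1 - γ) • ρ = ρ := by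
      rw [smul_smul, one_div_mul_cancel (ne_of_gt h1γ), one_smul]
    rw [hsm]
    have hPh : P *ᵥ h = ρ + h - r := by rw [hPoisson]; abel
    funext s
    have hs := congrFun hPh s
    simp only [Pi.add_apply, Pi.sub_apply, Pi.smul_apply, smul_eq_mul] at hs ⊢
    rw [hs]
    ring
  -- pointwise equation
  have hkey : ∀ s, u s = γ * (P *ᵥ u) s + (1 - γ) * (P *ᵥ h) s := by
    intro s
    have hc := congrFun (hAx u) s
    have hc2 := congrFun hAu s
    simp only [Pi.sub_apply, Pi.smul_apply, smul_eq_mul] at hc hc2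
    rw [hc] at hc2
    linarith
  -- bounds on h
  set M : ℝ := ⨆ s, h s with hM
  set m : ℝ := ⨅ s, h s with hm
  have hbddA : BddAbove (Set.range h) := Set.Finite.bddAbove (Set.finite_range h)
  have hbddB : BddBelow (Set.range h) := Set.Finite.bddBelow (Set.finite_range h)
  have hhM : ∀ s, h s ≤ M := fun s => le_ciSup hbddA s
  have hmh : ∀ s, m ≤ h s := fun s => ciInf_le hbddB s
  -- max principle: u ≤ M
  have huM : ∀ s, u s ≤ M := by
    obtain ⟨s0, hs0⟩ := Finite.exists_max u
    have hPu : (P *ᵥ u) s0 ≤ u s0 := hPle u (u s0) hs0 s0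
    have hPh : (P *ᵥ h) s0 ≤ M := hPle h M hhM s0
    have := hkey s0
    have hu0 : u s0 ≤ M := by nlinarith
    intro s
    exact le_trans (hs0 s) hu0
  have hmu : ∀ s, m ≤ u s := by
    obtain ⟨s1, hs1⟩ := Finite.exists_min u
    have hPu : u s1 ≤ (P *ᵥ u) s1 := hPge u (u s1) hs1 s1
    have hPh : m ≤ (P *ᵥ h) s1 := hPge h m hmh s1
    have := hkey s1
    have hu1 : m ≤ u s1 := by nlinarith
    intro s
    exact le_trans hu1 (hs1 s)
  -- conclude
  have hspan : spanSem h = M - m := rfl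
  have hspan0 : (0:ℝ) ≤ M - m := by
    obtain ⟨s⟩ := ‹Nonempty S›
    linarith [hhM s, hmh s]
  have hgoal : (1 / (1 - γ)) • ρ - V = u - h := by
    rw [hu]; abel
  rw [hgoal, hspan]
  rw [pi_norm_le_iff_of_nonneg hspan0]
  intro s
  rw [Real.norm_eq_abs, abs_le]
  constructor
  · simp only [Pi.sub_apply]
    linarith [hmu s, hhM s]
  · simp only [Pi.sub_apply]
    linarith [huM s, hmh s]
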